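/- Let R be a rigid subcategory of a triangulated category C and let R -> A -> B -> R[1] be a triangle with R in R. Then A lies in R * R[1] if and only if B lies in R * R[1]. -/

import Mathlib

open CategoryTheory CategoryTheory.Limits CategoryTheory.Pretriangulated

universe v u w

namespace RelCT

/-- Krull–Schmidt: every object decomposes as a finite biproduct of objects with local
endomorphism rings. -/
def KrullSchmidtCat (C : Type u) [Category.{v} C] [Preadditive C] : Prop :=
  ∀ X : C, ∃ (n : ℕ) (f : Fin n → C) (p : ∀ i, X ⟶ f i) (ι : ∀ i, f i ⟶ X),
    (∀ i, ι i ≫ p i = 𝟙 (f i)) ∧ (∑ i, p i ≫ ι i) = 𝟙 X ∧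
    ∀ i (φ : f i ⟶ f i), IsIso φ ∨ IsIso (𝟙 (f i) - φ)

/-- `Fac W`: objects admitting an epimorphism from an object of `W`. -/
def FacSet {Q : Type w} [Category Q] (W : Set Q) : Set Q :=
  {Y | ∃ X ∈ W, ∃ p : X ⟶ Y, Epi p}

/-- `Ext¹(X, F) = 0`, expressed as: every short exact sequence
`0 → F → E → X → 0` splits. -/
def Ext1Zero {Q : Type w} [Category Q] [Abelian Q] (X F : Q) : Prop :=
  ∀ S : CategoryTheory.ShortComplex Q, S.ShortExact → (S.X₁ ≅ F) → (S.X₃ ≅ X) →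
    ∃ r : S.X₂ ⟶ S.X₁, S.f ≫ r = 𝟙 S.X₁

variable {C : Type u} [Category.{v} C] [Preadditive C] [HasZeroObject C]
  [HasShift C ℤ] [∀ n : ℤ, (CategoryTheory.shiftFunctor C n).Additive] [Pretriangulated C]

/-- The shift `D[n]` of a collection of objects, closed under isomorphism. -/
def shiftSet (D : Set C) (n : ℤ) : Set C :=
  {X | ∃ Y ∈ D, Nonempty (X ≅ Y⟦n⟧)}

/-- `f` factors through an object of `D`. -/
def Factors (D : Set C) {A B : C} (f : A ⟶ B) : Prop :=
  ∃ (Z : C) (g : A ⟶ Z) (h : Z ⟶ B), Z ∈ D ∧ f = g ≫ h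

/-- `X * Y`: objects `M` admitting a distinguished triangle `A → M → B → A[1]`
with `A ∈ X`, `B ∈ Y`. -/
def star (X Y : Set C) : Set C :=
  {M | ∃ (A B : C) (f : A ⟶ M) (g : M ⟶ B) (h : B ⟶ A⟦(1:ℤ)⟧),
    A ∈ X ∧ B ∈ Y ∧ (Triangle.mk f g h ∈ distTriang C)}

/-- `R` is rigid: `Hom(R, R[1]) = 0`. -/
def Rigid (R : Set C) : Prop :=
  ∀ ⦃A B : C⦄, A ∈ R → B ∈ R → ∀ f : A ⟶ B⟦(1:ℤ)⟧, f = 0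

/-- `[R[1]](X, Y[1]) = 0` : every morphism from an object of `X` to a first shift of
an object of `Y` which factors through `R[1]` vanishes. -/
def RelRigid (R X Y : Set C) : Prop :=
  ∀ ⦃A B : C⦄, A ∈ X → B ∈ Y → ∀ f : A ⟶ B⟦(1:ℤ)⟧, Factors (shiftSet R 1) f → f = 0

/-- Closure of a collection of objects under finite direct sums and direct summands. -/
inductive addClosure (D : Set C) : C → Prop
  | of {X : C} : X ∈ D → addClosure D X
  | zero {X : C} : IsZero X → addClosure D X
  | sum {X Y Z : C} : addClosure D X → addClosure D Y →
      (∃ (pX : Z ⟶ X) (pY : Z ⟶ Y) (iX : X ⟶ Z) (iY : Y ⟶ Z),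
        iX ≫ pX = 𝟙 X ∧ iY ≫ pY = 𝟙 Y ∧ pX ≫ iX + pY ≫ iY = 𝟙 Z) →
      addClosure D Z
  | smd {X Y : C} : addClosure D Y → (∃ (s : X ⟶ Y) (r : Y ⟶ X), s ≫ r = 𝟙 X) →
      addClosure D X

/-- `D` is closed under finite direct sums and direct summands. -/
def AddClosed (D : Set C) : Prop := ∀ X : C, addClosure D X → X ∈ D

/-- closed under direct sums (expressed via biproduct data). -/
def SumClosed (D : Set C) : Prop :=
  ∀ ⦃X Y Z : C⦄, X ∈ D → Y ∈ D →
    (∃ (pX : Z ⟶ X) (pY : Z ⟶ Y) (iX : X ⟶ Z) (iY : Y ⟶ Z),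
      iX ≫ pX = 𝟙 X ∧ iY ≫ pY = 𝟙 Y ∧ pX ≫ iX + pY ≫ iY = 𝟙 Z) → Z ∈ D

/-- closed under direct summands. -/
def SummandClosed (D : Set C) : Prop :=
  ∀ ⦃X Y : C⦄, Y ∈ D → (∃ (s : X ⟶ Y) (r : Y ⟶ X), s ≫ r = 𝟙 X) → X ∈ D

/-- closed under isomorphisms. -/
def IsoClosed (D : Set C) : Prop :=
  ∀ ⦃X Y : C⦄, X ∈ D → Nonempty (X ≅ Y) → Y ∈ D

/-- `f : A ⟶ X` is a left `D`-approximation of `A`. -/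
def IsLeftApprox (D : Set C) {A X : C} (f : A ⟶ X) : Prop :=
  X ∈ D ∧ ∀ ⦃X' : C⦄, X' ∈ D → ∀ g : A ⟶ X', ∃ h : X ⟶ X', f ≫ h = g

/-- `f : X ⟶ A` is a right `D`-approximation of `A`. -/
def IsRightApprox (D : Set C) {X A : C} (f : X ⟶ A) : Prop :=
  X ∈ D ∧ ∀ ⦃X' : C⦄, X' ∈ D → ∀ g : X' ⟶ A, ∃ h : X' ⟶ X, h ≫ f = g

/-- `f` is left minimal. -/
def LeftMinimal {A B : C} (f : A ⟶ B) : Prop :=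
  ∀ u : B ⟶ B, f ≫ u = f → IsIso u

/-- `f` is right minimal. -/
def RightMinimal {A B : C} (f : A ⟶ B) : Prop :=
  ∀ u : A ⟶ A, u ≫ f = f → IsIso u

/-- `f` lies in the Jacobson radical of the category. -/
def InRadical {A B : C} (f : A ⟶ B) : Prop :=
  ∀ g : B ⟶ A, IsIso (𝟙 A - f ≫ g)

/-- indecomposable object. -/
def Indec (W : C) : Prop :=
  ¬ IsZero W ∧ ∀ p : W ⟶ W, p ≫ p = p → p = 0 ∨ p = 𝟙 W

/-- two-term `R[1]`-rigid subcategory. -/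
def TwoTermRigid (R X : Set C) : Prop :=
  RelRigid R X X ∧ X ⊆ star R (shiftSet R 1)

/-- two-term maximal `R[1]`-rigid subcategory. -/
def TwoTermMaximal (R X : Set C) : Prop :=
  TwoTermRigid R X ∧
  ∀ M ∈ star R (shiftSet R 1),
    RelRigid R {Z | addClosure (insert M X) Z} {Z | addClosure (insert M X) Z} → M ∈ X

/-- two-term weak `R[1]`-cluster tilting subcategory. -/
def TwoTermWCT (R X : Set C) : Prop :=
  X ⊆ star R (shiftSet R 1) ∧ R ⊆ star (shiftSet X (-1)) X ∧
  ∀ M : C, M ∈ X ↔ (M ∈ star R (shiftSet R 1) ∧ RelRigid R {M} X ∧ RelRigid R X {M})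

/-- `R(X) = { R₀ ∈ R | Hom(R₀, X) = 0 }`. -/
def RZero (R X : Set C) : Set C :=
  {A | A ∈ R ∧ ∀ B ∈ X, ∀ f : A ⟶ B, f = 0}

/-- `X` is `R[1]`-functorially finite. -/
def RFunctoriallyFinite (R X : Set C) : Prop :=
  (∀ R₀ ∈ R, ∃ (X₀ : C) (f : R₀ ⟶ X₀), IsLeftApprox X f) ∧
  (∀ A ∈ shiftSet R 1, ∃ (X₀ : C) (f : X₀ ⟶ A), IsRightApprox X f)

/-- Data of triangles `R₀ → X^{R₀} → V^{R₀} → R₀[1]` with minimal left `X`-approximations,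
defining the completion `M_X`. -/
structure MData (R X : Set C) where
  obj : ∀ R₀ : C, R₀ ∈ R → C
  cone : ∀ R₀ : C, R₀ ∈ R → C
  f : ∀ (R₀ : C) (h : R₀ ∈ R), R₀ ⟶ obj R₀ h
  g : ∀ (R₀ : C) (h : R₀ ∈ R), obj R₀ h ⟶ cone R₀ h
  w : ∀ (R₀ : C) (h : R₀ ∈ R), cone R₀ h ⟶ R₀⟦(1:ℤ)⟧
  tri : ∀ (R₀ : C) (h : R₀ ∈ R), Triangle.mk (f R₀ h) (g R₀ h) (w R₀ h) ∈ distTriang C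
  approx : ∀ (R₀ : C) (h : R₀ ∈ R), IsLeftApprox X (f R₀ h)
  minimal : ∀ (R₀ : C) (h : R₀ ∈ R), LeftMinimal (f R₀ h)

/-- `M_X = add (X ∪ {V^R | R ∈ R})`. -/
def MData.cat {R X : Set C} (d : MData R X) : Set C :=
  {Z | addClosure (X ∪ {V | ∃ (R₀ : C) (h : R₀ ∈ R), V = d.cone R₀ h}) Z}

/-- Data of triangles `R₀ → V_{R₀} → U_{R₀} → R₀[1]` with the last map a right
`X`-approximation, defining the completion `N_X`. -/
structure NData (R X : Set C) where
  cocone : ∀ R₀ : C, R₀ ∈ R → C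
  obj : ∀ R₀ : C, R₀ ∈ R → C
  a : ∀ (R₀ : C) (h : R₀ ∈ R), R₀ ⟶ cocone R₀ h
  b : ∀ (R₀ : C) (h : R₀ ∈ R), cocone R₀ h ⟶ obj R₀ h
  c : ∀ (R₀ : C) (h : R₀ ∈ R), obj R₀ h ⟶ R₀⟦(1:ℤ)⟧
  tri : ∀ (R₀ : C) (h : R₀ ∈ R), Triangle.mk (a R₀ h) (b R₀ h) (c R₀ h) ∈ distTriang C
  approx : ∀ (R₀ : C) (h : R₀ ∈ R), IsRightApprox X (c R₀ h)

/-- `N_X = add (X ∪ {V_R | R ∈ R})`. -/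
def NData.cat {R X : Set C} (d : NData R X) : Set C :=
  {Z | addClosure (X ∪ {V | ∃ (R₀ : C) (h : R₀ ∈ R), V = d.cocone R₀ h}) Z}

/-- `(M, N)` is an `X`-mutation pair. -/
def MutationPair (R X M N : Set C) : Prop :=
  M ≠ N ∧ TwoTermWCT R M ∧ TwoTermWCT R N ∧ X ⊆ M ∧ X ⊆ N ∧
  (∀ Y ∈ M, ∃ (Z X₀ : C) (z : Z ⟶ X₀) (x : X₀ ⟶ Y) (y : Y ⟶ Z⟦(1:ℤ)⟧),
      Z ∈ N ∧ X₀ ∈ X ∧ (Triangle.mk z x y ∈ distTriang C) ∧ Factors (shiftSet R 1) y) ∧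
  (∀ Z' ∈ N, ∃ (X' Y' : C) (z' : Z' ⟶ X') (x' : X' ⟶ Y') (y' : Y' ⟶ Z'⟦(1:ℤ)⟧),
      X' ∈ X ∧ Y' ∈ M ∧ (Triangle.mk z' x' y' ∈ distTriang C) ∧ Factors (shiftSet R 1) y')

/-- almost complete two-term weak `R[1]`-cluster tilting subcategory. -/
def AlmostComplete (R X : Set C) : Prop :=
  TwoTermRigid R X ∧ RFunctoriallyFinite R X ∧
    ∃ W : C, Indec W ∧ W ∉ X ∧ TwoTermWCT R {Z | addClosure (insert W X) Z}

/-- completion of an almost complete subcategory `X`. -/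
def IsCompletion (R X U : Set C) : Prop :=
  TwoTermWCT R U ∧ ∃ W : C, Indec W ∧ W ∉ X ∧ U = {Z | addClosure (insert W X) Z}


/-- Auxiliary: a binary biproduct of objects in the additive closure is in the
additive closure. -/
lemma addClosure_biprod {D : Set C} {X Y : C} (hX : addClosure D X) (hY : addClosure D Y) :
    addClosure D (X ⊞ Y) :=
  addClosure.sum hX hY ⟨biprod.fst, biprod.snd, biprod.inl, biprod.inr,
    biprod.inl_fst, biprod.inr_snd, biprod.total⟩

/-- Auxiliary: the `(-1)`-shift of a binary biproduct is a retract of the biproduct of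
objects isomorphic to the `(-1)`-shifts of the factors. -/
lemma shift_neg_one_biprod_retract (X Y X' Y' : C)
    (eX : (X : C)⟦(-1:ℤ)⟧ ≅ X') (eY : (Y : C)⟦(-1:ℤ)⟧ ≅ Y') :
    ∃ (p : ((X ⊞ Y : C)⟦(-1:ℤ)⟧ : C) ⟶ X' ⊞ Y') (q : (X' ⊞ Y' : C) ⟶ ((X ⊞ Y : C)⟦(-1:ℤ)⟧ : C)),
      p ≫ q = 𝟙 _ := by
  refine ⟨biprod.lift ((shiftFunctor C (-1:ℤ)).map biprod.fst ≫ eX.hom)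
      ((shiftFunctor C (-1:ℤ)).map biprod.snd ≫ eY.hom),
    biprod.desc (eX.inv ≫ (shiftFunctor C (-1:ℤ)).map biprod.inl)
      (eY.inv ≫ (shiftFunctor C (-1:ℤ)).map biprod.inr), ?_⟩
  rw [biprod.lift_desc]
  simp only [Category.assoc, Iso.hom_inv_id_assoc, ← Functor.map_comp]
  rw [← Functor.map_add, biprod.total, CategoryTheory.Functor.map_id]

theorem statement_2 (R : Set C) (hrig : Rigid R) (haddR : AddClosed R)
    {R₀ A B : C} (hR₀ : R₀ ∈ R) (f : R₀ ⟶ A) (g : A ⟶ B) (h : B ⟶ R₀⟦(1:ℤ)⟧)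
    (hT : Triangle.mk f g h ∈ distTriang C) :
    A ∈ star R (shiftSet R 1) ↔ B ∈ star R (shiftSet R 1) := by
  constructor
  · -- forward direction
    rintro ⟨R₁, X, a, b', c', hR₁, ⟨R₂, hR₂, ⟨e⟩⟩, hTA⟩
    have hab : a ≫ b' = 0 := comp_distTriang_mor_zero₁₂ _ hTA
    have hgh : g ≫ h = 0 := comp_distTriang_mor_zero₂₃ _ hT
    -- rigidity : `f ≫ b' = 0`
    have hcb : (f ≫ b') ≫ e.hom = 0 := hrig hR₀ hR₂ _
    have hfb : f ≫ b' = 0 := by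
      have := hcb =≫ e.inv
      simpa using this
    -- factor `b'` through `g`
    obtain ⟨t, ht⟩ : ∃ t : B ⟶ X, b' = g ≫ t := Triangle.yoneda_exact₂ _ hT b' hfb
    replace ht : b' = g ≫ t := ht
    -- complete `(t, h) : B ⟶ X ⊞ R₀⟦1⟧` to a triangle `W ⟶ B ⟶ X ⊞ R₀⟦1⟧ ⟶ W⟦1⟧`
    obtain ⟨W, w, δ, hTw⟩ := distinguished_cocone_triangle₁ (biprod.lift t h : B ⟶ X ⊞ R₀⟦(1:ℤ)⟧)
    have hwlift : w ≫ biprod.lift t h = 0 := comp_distTriang_mor_zero₁₂ _ hTw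
    have hwt : w ≫ t = 0 := by
      have := hwlift =≫ biprod.fst
      simpa using this
    have hwh : w ≫ h = 0 := by
      have := hwlift =≫ biprod.snd
      simpa using this
    -- `a ≫ g` lifts to `α : R₁ ⟶ W`
    have hagl : (a ≫ g) ≫ biprod.lift t h = 0 := by
      apply biprod.hom_ext
      · simp only [Category.assoc, biprod.lift_fst, ← ht, hab, zero_comp, comp_zero]
      · simp only [Category.assoc, biprod.lift_snd, hgh, zero_comp, comp_zero]
    obtain ⟨α, hα⟩ : ∃ α : R₁ ⟶ W, a ≫ g = α ≫ w :=
      Triangle.coyoneda_exact₂ _ hTw (a ≫ g) hagl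
    -- `w` factors as `β ≫ a` up to `g`
    obtain ⟨w2, hw2⟩ : ∃ w2 : W ⟶ A, w = w2 ≫ g := Triangle.coyoneda_exact₃ _ hT w hwh
    replace hw2 : w = w2 ≫ g := hw2
    have hw2b : w2 ≫ b' = 0 := by rw [ht, ← Category.assoc, ← hw2, hwt]
    obtain ⟨β, hβ⟩ : ∃ β : W ⟶ R₁, w2 = β ≫ a := Triangle.coyoneda_exact₂ _ hTA w2 hw2b
    replace hβ : w2 = β ≫ a := hβ
    -- `β ≫ α - 𝟙 W` factors through the inverse rotation
    have hmw : (β ≫ α - 𝟙 W) ≫ w = 0 := by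
      rw [Preadditive.sub_comp, Category.id_comp, Category.assoc, ← hα, ← Category.assoc,
        ← hβ, ← hw2, sub_self]
    obtain ⟨ζ, hζ⟩ : ∃ ζ : W ⟶ ((X ⊞ R₀⟦(1:ℤ)⟧ : C)⟦(-1:ℤ)⟧ : C),
        β ≫ α - 𝟙 W = ζ ≫ (Triangle.mk w (biprod.lift t h) δ).invRotate.mor₁ :=
      Triangle.coyoneda_exact₂ _
      (inv_rot_of_distTriang _ hTw) (β ≫ α - 𝟙 W) hmw
    -- `W` is a retract of `R₁ ⊞ (X ⊞ R₀⟦1⟧)⟦-1⟧`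
    have hsj : (biprod.lift β (-ζ) : W ⟶ R₁ ⊞ (((X ⊞ R₀⟦(1:ℤ)⟧ : C)⟦(-1:ℤ)⟧ : C))) ≫
        biprod.desc α ((Triangle.mk w (biprod.lift t h) δ).invRotate.mor₁) = 𝟙 W := by
      erw [biprod.lift_desc, Preadditive.neg_comp, ← hζ]
      abel
    -- membership of the shifted biproduct in `R`
    have eX : ((X : C)⟦(-1:ℤ)⟧ : C) ≅ R₂ :=
      (shiftFunctor C (-1:ℤ)).mapIso e ≪≫
        (shiftFunctorCompIsoId C (1:ℤ) (-1:ℤ) (by norm_num)).app R₂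
    have eR : ((R₀⟦(1:ℤ)⟧ : C)⟦(-1:ℤ)⟧ : C) ≅ R₀ :=
      (shiftFunctorCompIsoId C (1:ℤ) (-1:ℤ) (by norm_num)).app R₀
    have hSmcl : addClosure R (((X ⊞ R₀⟦(1:ℤ)⟧ : C)⟦(-1:ℤ)⟧ : C)) := by
      obtain ⟨p, q, hpq⟩ := shift_neg_one_biprod_retract X (R₀⟦(1:ℤ)⟧) R₂ R₀ eX eR
      exact addClosure.smd (addClosure_biprod (addClosure.of hR₂) (addClosure.of hR₀))
        ⟨p, q, hpq⟩
    have hWR : W ∈ R :=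
      haddR _ (addClosure.smd (addClosure_biprod (addClosure.of hR₁) hSmcl) ⟨_, _, hsj⟩)
    have hSmem : (X ⊞ R₀⟦(1:ℤ)⟧ : C) ∈ shiftSet R 1 :=
      ⟨((X ⊞ R₀⟦(1:ℤ)⟧ : C)⟦(-1:ℤ)⟧ : C), haddR _ hSmcl,
        ⟨((shiftFunctorCompIsoId C (-1:ℤ) (1:ℤ) (by norm_num)).app _).symm⟩⟩
    exact ⟨W, X ⊞ R₀⟦(1:ℤ)⟧, w, biprod.lift t h, δ, hWR, hSmem, hTw⟩
  · -- backward direction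
    rintro ⟨R₁, X, a, b', c', hR₁, ⟨R₂, hR₂, ⟨e⟩⟩, hTB⟩
    have hab : a ≫ b' = 0 := comp_distTriang_mor_zero₁₂ _ hTB
    have hfg : f ≫ g = 0 := comp_distTriang_mor_zero₁₂ _ hT
    -- rigidity : `a ≫ h = 0`
    have hah : a ≫ h = 0 := hrig hR₁ hR₀ _
    -- factor `a` through `g`
    obtain ⟨a2, ha2⟩ : ∃ a2 : R₁ ⟶ A, a = a2 ≫ g := Triangle.coyoneda_exact₃ _ hT a hah
    replace ha2 : a = a2 ≫ g := ha2
    -- complete `(f, a2) : R₀ ⊞ R₁ ⟶ A` to a triangle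
    obtain ⟨V, u, v, hTV⟩ := distinguished_cocone_triangle (biprod.desc f a2 : R₀ ⊞ R₁ ⟶ A)
    have hΨu : biprod.desc f a2 ≫ u = 0 := comp_distTriang_mor_zero₁₂ _ hTV
    have hfu : f ≫ u = 0 := by
      have := biprod.inl ≫= hΨu
      simpa using this
    have ha2u : a2 ≫ u = 0 := by
      have := biprod.inr ≫= hΨu
      simpa using this
    obtain ⟨u2, hu2⟩ : ∃ u2 : B ⟶ V, u = g ≫ u2 := Triangle.yoneda_exact₂ _ hT u hfu
    replace hu2 : u = g ≫ u2 := hu2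
    have hau2 : a ≫ u2 = 0 := by rw [ha2, Category.assoc, ← hu2, ha2u]
    obtain ⟨u3, hu3⟩ : ∃ u3 : X ⟶ V, u2 = b' ≫ u3 := Triangle.yoneda_exact₂ _ hTB u2 hau2
    replace hu3 : u2 = b' ≫ u3 := hu3
    -- `g ≫ b'` descends to `χ : V ⟶ X`
    have hgb : biprod.desc f a2 ≫ (g ≫ b') = 0 := by
      apply biprod.hom_ext'
      · rw [biprod.inl_desc_assoc, ← Category.assoc, hfg, zero_comp, comp_zero]
      · rw [biprod.inr_desc_assoc, ← Category.assoc, ← ha2, hab, comp_zero]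
    obtain ⟨χ, hχ⟩ : ∃ χ : V ⟶ X, g ≫ b' = u ≫ χ :=
      Triangle.yoneda_exact₂ _ hTV (g ≫ b') hgb
    -- `χ ≫ u3 - 𝟙 V` factors through `v`
    have hum : u ≫ (χ ≫ u3 - 𝟙 V) = 0 := by
      rw [Preadditive.comp_sub, Category.comp_id, ← Category.assoc, ← hχ, Category.assoc,
        ← hu3, ← hu2, sub_self]
    obtain ⟨n, hn⟩ : ∃ n : (R₀ ⊞ R₁ : C)⟦(1:ℤ)⟧ ⟶ V, χ ≫ u3 - 𝟙 V = v ≫ n :=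
      Triangle.yoneda_exact₃ _ hTV (χ ≫ u3 - 𝟙 V) hum
    replace hn : χ ≫ u3 - 𝟙 V = v ≫ n := hn
    -- `V` is a retract of `X ⊞ (R₀ ⊞ R₁)⟦1⟧`
    have hsj : (biprod.lift χ (-v) : V ⟶ X ⊞ ((R₀ ⊞ R₁ : C)⟦(1:ℤ)⟧ : C)) ≫
        biprod.desc u3 n = 𝟙 V := by
      rw [biprod.lift_desc, Preadditive.neg_comp, ← hn]
      abel
    -- membership of `V⟦-1⟧` in `R`
    have eX : ((X : C)⟦(-1:ℤ)⟧ : C) ≅ R₂ :=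
      (shiftFunctor C (-1:ℤ)).mapIso e ≪≫
        (shiftFunctorCompIsoId C (1:ℤ) (-1:ℤ) (by norm_num)).app R₂
    have eP : (((R₀ ⊞ R₁ : C)⟦(1:ℤ)⟧ : C)⟦(-1:ℤ)⟧ : C) ≅ (R₀ ⊞ R₁ : C) :=
      (shiftFunctorCompIsoId C (1:ℤ) (-1:ℤ) (by norm_num)).app (R₀ ⊞ R₁)
    have hVR : ((V : C)⟦(-1:ℤ)⟧ : C) ∈ R := by
      apply haddR
      obtain ⟨p, q, hpq⟩ := shift_neg_one_biprod_retract X ((R₀ ⊞ R₁ : C)⟦(1:ℤ)⟧) R₂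
        (R₀ ⊞ R₁) eX eP
      refine addClosure.smd (addClosure.smd (addClosure_biprod (addClosure.of hR₂)
        (addClosure_biprod (addClosure.of hR₀) (addClosure.of hR₁))) ⟨p, q, hpq⟩)
        ⟨(shiftFunctor C (-1:ℤ)).map (biprod.lift χ (-v)),
          (shiftFunctor C (-1:ℤ)).map (biprod.desc u3 n), ?_⟩
      rw [← Functor.map_comp, hsj, CategoryTheory.Functor.map_id]
    have hVmem : V ∈ shiftSet R 1 :=
      ⟨((V : C)⟦(-1:ℤ)⟧ : C), hVR,
        ⟨((shiftFunctorCompIsoId C (-1:ℤ) (1:ℤ) (by norm_num)).app V).symm⟩⟩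
    exact ⟨R₀ ⊞ R₁, V, biprod.desc f a2, u, v,
      haddR _ (addClosure_biprod (addClosure.of hR₀) (addClosure.of hR₁)), hVmem, hTV⟩

end RelCT
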